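/- Let a family of complete, transitive, continuous, strictly monotone preference relations {≿_z}_{z ∈ R^n_+} on R^n_+ satisfy both narrow bracketing (x ≿_z y iff x ≿_{z'} y for all z, z') and broad bracketing (x ≿_z y iff x + z ≿_0 y + z). Then there exists a vector u ∈ R^n_{++} such that for all x, y, z: x ≿_z y if and only if u·x ≥ u·y. -/

import Mathlib

/-- a family of complete, transitive, continuous, strictly
monotone preferences on ℝⁿ₊ satisfying both narrow and broad bracketing is
represented by a strictly positive linear functional. -/
theorem narrow_and_broad_bracketing_imply_linear {n : ℕ}
    (R : (Fin n → ℝ) → (Fin n → ℝ) → (Fin n → ℝ) → Prop)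
    -- nonnegativity predicate for ℝⁿ₊
    (nn : (Fin n → ℝ) → Prop) (hnn : nn = fun x => ∀ i, 0 ≤ x i)
    -- complete
    (hcomp : ∀ z x y, nn z → nn x → nn y → R z x y ∨ R z y x)
    -- transitive
    (htrans : ∀ z x y w, nn z → nn x → nn y → nn w →
      R z x y → R z y w → R z x w)
    -- continuous: upper and lower contour sets (within ℝⁿ₊) are closed
    (hcont : ∀ z x, nn z → nn x →
      IsClosed {y | nn y ∧ R z y x} ∧ IsClosed {y | nn y ∧ R z x y})
    -- strictly monotone
    (hmono : ∀ z x y, nn z → nn x → nn y → y ≤ x → y ≠ x →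
      R z x y ∧ ¬ R z y x)
    -- narrow bracketing
    (hnarrow : ∀ z z' x y, nn z → nn z' → nn x → nn y → (R z x y ↔ R z' x y))
    -- broad bracketing
    (hbroad : ∀ z x y, nn z → nn x → nn y → (R z x y ↔ R 0 (x + z) (y + z))) :
    ∃ u : Fin n → ℝ, (∀ i, 0 < u i) ∧
      ∀ z x y, nn z → nn x → nn y →
        (R z x y ↔ ∑ i, u i * y i ≤ ∑ i, u i * x i) := by
  classical
  subst hnn
  have nn0 : ∀ i : Fin n, (0:ℝ) ≤ (0 : Fin n → ℝ) i := fun i => le_refl 0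
  rcases Nat.eq_zero_or_pos n with hn | hn
  · subst hn
    refine ⟨fun i => 1, fun i => i.elim0, ?_⟩
    intro z x y hz hx hy
    have hxy : x = y := Subsingleton.elim x y
    subst hxy
    have : R z x x := (hcomp z x x hz hx hx).elim id id
    simp [this]
  -- main case: n > 0
  have i0 : Fin n := ⟨0, hn⟩
  set ones : ℝ → (Fin n → ℝ) := fun t _ => t with hones
  have nnones : ∀ t : ℝ, 0 ≤ t → ∀ i, (0:ℝ) ≤ ones t i := fun t ht i => ht
  have hrefl : ∀ x, (∀ i, 0 ≤ x i) → R 0 x x :=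
    fun x hx => (hcomp 0 x x nn0 hx hx).elim id id
  have hmonow : ∀ x y, (∀ i, 0 ≤ x i) → (∀ i, 0 ≤ y i) → y ≤ x → R 0 x y := by
    intro x y hx hy hle
    rcases eq_or_ne y x with h | h
    · subst h; exact hrefl y hy
    · exact (hmono 0 x y nn0 hx hy hle h).1
  have htr : ∀ x y w, (∀ i, 0 ≤ x i) → (∀ i, 0 ≤ y i) → (∀ i, 0 ≤ w i) →
      R 0 x y → R 0 y w → R 0 x w := fun x y w hx hy hw => htrans 0 x y w nn0 hx hy hw
  have hshift : ∀ x y z, (∀ i, 0 ≤ x i) → (∀ i, 0 ≤ y i) → (∀ i, 0 ≤ z i) →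
      (R 0 x y ↔ R 0 (x + z) (y + z)) := by
    intro x y z hx hy hz
    rw [hnarrow 0 z x y nn0 hz hx hy]
    exact hbroad z x y hz hx hy
  -- strict comparison of constant bundles
  have hones_strict : ∀ s t : ℝ, 0 ≤ s → s < t →
      R 0 (ones t) (ones s) ∧ ¬ R 0 (ones s) (ones t) := by
    intro s t hs hst
    refine hmono 0 (ones t) (ones s) nn0 (nnones t (hs.trans hst.le)) (nnones s hs)
      (fun i => hst.le) ?_
    intro h
    exact absurd (congrFun h i0) hst.ne
  -- existence of a certainty equivalent
  have hex : ∀ x : Fin n → ℝ, ∃ t : ℝ,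
      (∀ i, 0 ≤ x i) → (0 ≤ t ∧ R 0 x (ones t) ∧ R 0 (ones t) x) := by
    intro x
    by_cases hx : ∀ i, 0 ≤ x i
    swap
    · exact ⟨0, fun h => absurd h hx⟩
    have hf : Continuous ones := continuous_pi fun i => continuous_id
    have hA : IsClosed (ones ⁻¹' {y | (∀ i, 0 ≤ y i) ∧ R 0 y x}) :=
      ((hcont 0 x nn0 hx).1).preimage hf
    have hB : IsClosed (ones ⁻¹' {y | (∀ i, 0 ≤ y i) ∧ R 0 x y}) :=
      ((hcont 0 x nn0 hx).2).preimage hf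
    have hcover : Set.Ici (0:ℝ) ⊆ (ones ⁻¹' {y | (∀ i, 0 ≤ y i) ∧ R 0 y x}) ∪
        (ones ⁻¹' {y | (∀ i, 0 ≤ y i) ∧ R 0 x y}) := by
      intro t ht
      rcases hcomp 0 (ones t) x nn0 (nnones t ht) hx with h | h
      · exact Or.inl ⟨nnones t ht, h⟩
      · exact Or.inr ⟨nnones t ht, h⟩
    have hAne : (Set.Ici (0:ℝ) ∩ ones ⁻¹' {y | (∀ i, 0 ≤ y i) ∧ R 0 y x}).Nonempty := by
      refine ⟨∑ i, x i, Finset.sum_nonneg fun i _ => hx i, ?_, ?_⟩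
      · exact nnones _ (Finset.sum_nonneg fun i _ => hx i)
      · refine hmonow (ones (∑ i, x i)) x (nnones _ (Finset.sum_nonneg fun i _ => hx i)) hx ?_
        intro i
        exact Finset.single_le_sum (fun j _ => hx j) (Finset.mem_univ i)
    have hBne : (Set.Ici (0:ℝ) ∩ ones ⁻¹' {y | (∀ i, 0 ≤ y i) ∧ R 0 x y}).Nonempty := by
      refine ⟨0, Set.mem_Ici.mpr le_rfl, nnones 0 le_rfl, ?_⟩
      exact hmonow x (ones 0) hx (nnones 0 le_rfl) (fun i => hx i)
    obtain ⟨t, ht0, ⟨-, ht1⟩, -, ht2⟩ :=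
      (isPreconnected_closed_iff.mp isPreconnected_Ici) _ _ hA hB hcover hAne hBne
    exact ⟨t, fun _ => ⟨ht0, ht2, ht1⟩⟩
  choose c hc using hex
  -- uniqueness of certainty equivalents
  have huniq : ∀ (x : Fin n → ℝ) (s t : ℝ), 0 ≤ s → 0 ≤ t →
      (∀ i, 0 ≤ x i) → R 0 x (ones s) → R 0 (ones s) x →
      R 0 x (ones t) → R 0 (ones t) x → s = t := by
    intro x s t hs ht hx hxs hsx hxt htx
    rcases lt_trichotomy s t with h | h | h
    · exact absurd (htr (ones s) x (ones t) (nnones s hs) hx (nnones t ht) hsx hxt)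
        (hones_strict s t hs h).2
    · exact h
    · exact absurd (htr (ones t) x (ones s) (nnones t ht) hx (nnones s hs) htx hxs)
        (hones_strict t s ht h).2
  -- representation by c
  have hrep : ∀ x y, (∀ i, 0 ≤ x i) → (∀ i, 0 ≤ y i) → (R 0 x y ↔ c y ≤ c x) := by
    intro x y hx hy
    obtain ⟨hcx0, hcx1, hcx2⟩ := hc x hx
    obtain ⟨hcy0, hcy1, hcy2⟩ := hc y hy
    constructor
    · intro h
      by_contra hlt
      push_neg at hlt
      have h1 : R 0 (ones (c x)) (ones (c y)) := by
        have h2 : R 0 (ones (c x)) y :=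
          htr (ones (c x)) x y (nnones _ hcx0) hx hy hcx2 h
        exact htr (ones (c x)) y (ones (c y)) (nnones _ hcx0) hy (nnones _ hcy0) h2 hcy1
      exact (hones_strict (c x) (c y) hcx0 hlt).2 h1
    · intro h
      have h1 : R 0 (ones (c x)) (ones (c y)) :=
        hmonow _ _ (nnones _ hcx0) (nnones _ hcy0) (fun i => h)
      have h2 : R 0 x (ones (c y)) :=
        htr x (ones (c x)) (ones (c y)) hx (nnones _ hcx0) (nnones _ hcy0) hcx1 h1
      exact htr x (ones (c y)) y hx (nnones _ hcy0) hy h2 hcy2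
  -- additivity of c
  have hadd : ∀ x y, (∀ i, 0 ≤ x i) → (∀ i, 0 ≤ y i) → c (x + y) = c x + c y := by
    intro x y hx hy
    have hxy : ∀ i, (0:ℝ) ≤ (x + y) i := fun i => add_nonneg (hx i) (hy i)
    obtain ⟨hcx0, hcx1, hcx2⟩ := hc x hx
    obtain ⟨hcy0, hcy1, hcy2⟩ := hc y hy
    obtain ⟨hs0, hs1, hs2⟩ := hc (x + y) hxy
    have key : ones (c x) + ones (c y) = ones (c x + c y) := rfl
    -- x + y ∼ ones (c x) + y
    have e1 : R 0 (x + y) (ones (c x) + y) ∧ R 0 (ones (c x) + y) (x + y) :=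
      ⟨(hshift x (ones (c x)) y hx (nnones _ hcx0) hy).mp hcx1,
       (hshift (ones (c x)) x y (nnones _ hcx0) hx hy).mp hcx2⟩
    -- ones (c x) + y ∼ ones (c x) + ones (c y)
    have e2 : R 0 (ones (c x) + y) (ones (c x) + ones (c y)) ∧
        R 0 (ones (c x) + ones (c y)) (ones (c x) + y) := by
      have p1 := (hshift y (ones (c y)) (ones (c x)) hy (nnones _ hcy0) (nnones _ hcx0)).mp hcy1
      have p2 := (hshift (ones (c y)) y (ones (c x)) (nnones _ hcy0) hy (nnones _ hcx0)).mp hcy2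
      rw [add_comm y (ones (c x)), add_comm (ones (c y)) (ones (c x))] at p1 p2
      exact ⟨p1, p2⟩
    have nn1 : ∀ i, (0:ℝ) ≤ (ones (c x) + y) i := fun i => add_nonneg hcx0 (hy i)
    have nn2 : ∀ i, (0:ℝ) ≤ (ones (c x) + ones (c y)) i := fun i => add_nonneg hcx0 hcy0
    have e3 : R 0 (x + y) (ones (c x + c y)) := by
      rw [← key]
      exact htr _ _ _ hxy nn1 nn2 e1.1 e2.1
    have e4 : R 0 (ones (c x + c y)) (x + y) := by
      rw [← key]
      exact htr _ _ _ nn2 nn1 hxy e2.2 e1.2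
    exact huniq (x + y) (c (x+y)) (c x + c y) hs0 (add_nonneg hcx0 hcy0) hxy hs1 hs2 e3 e4
  -- c 0 = 0
  have hc0 : c 0 = 0 := by
    obtain ⟨h0, h1, h2⟩ := hc 0 nn0
    have : ones 0 = (0 : Fin n → ℝ) := rfl
    exact (huniq 0 (c 0) 0 h0 le_rfl nn0 h1 h2 (this ▸ hrefl 0 nn0) (this ▸ hrefl 0 nn0)).symm
      ▸ rfl
  -- nonnegativity of single bundles
  have nnsingle : ∀ (i : Fin n) (t : ℝ), 0 ≤ t → ∀ j, (0:ℝ) ≤ (Pi.single i t : Fin n → ℝ) j := by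
    intro i t ht j
    rcases eq_or_ne j i with h | h
    · subst h; simpa using ht
    · simp [Pi.single_eq_of_ne h]
  -- per-coordinate scalar linearity
  have key : ∀ (i : Fin n) (t : ℝ), 0 ≤ t →
      c (Pi.single i t) = t * c (Pi.single i 1) := by
    intro i
    set f : ℝ → ℝ := fun t => c (Pi.single i t) with hf
    have fadd : ∀ s t : ℝ, 0 ≤ s → 0 ≤ t → f (s + t) = f s + f t := by
      intro s t hs ht
      show c (Pi.single i (s + t)) = _
      rw [Pi.single_add]
      exact hadd _ _ (nnsingle i s hs) (nnsingle i t ht)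
    have fmono : ∀ s t : ℝ, 0 ≤ s → s ≤ t → f s ≤ f t := by
      intro s t hs hst
      refine (hrep (Pi.single i t) (Pi.single i s) (nnsingle i t (hs.trans hst))
        (nnsingle i s hs)).mp ?_
      refine hmonow _ _ (nnsingle i t (hs.trans hst)) (nnsingle i s hs) ?_
      intro j
      rcases eq_or_ne j i with h | h
      · subst h; simpa using hst
      · simp [Pi.single_eq_of_ne h]
    have f0 : f 0 = 0 := by
      have := fadd 0 0 le_rfl le_rfl
      rw [add_zero] at this
      linarith
    have fpos : 0 < f 1 := by
      have hne : (0 : Fin n → ℝ) ≠ Pi.single i 1 := by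
        intro h
        have := congrFun h i
        simp at this
      have := (hmono 0 (Pi.single i 1) 0 nn0 (nnsingle i 1 zero_le_one) nn0
        (nnsingle i 1 zero_le_one) hne).2
      by_contra hle
      push_neg at hle
      have h0 : c (0 : Fin n → ℝ) = 0 := hc0
      have : R 0 (0 : Fin n → ℝ) (Pi.single i 1) := by
        refine (hrep 0 (Pi.single i 1) nn0 (nnsingle i 1 zero_le_one)).mpr ?_
        rw [h0]
        exact hle
      exact absurd this ‹¬ R 0 (0 : Fin n → ℝ) (Pi.single i 1)›
    have fnat : ∀ (m : ℕ) (t : ℝ), 0 ≤ t → f (m * t) = m * f t := by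
      intro m
      induction m with
      | zero => intro t ht; simpa using f0
      | succ k ih =>
        intro t ht
        have : ((k : ℝ) + 1) * t = k * t + t := by ring
        push_cast
        rw [this, fadd (k * t) t (by positivity) ht, ih t ht]
        ring
    have frat : ∀ q : ℚ, 0 ≤ q → f q = q * f 1 := by
      intro q hq
      have hden : (0:ℝ) < (q.den : ℝ) := by exact_mod_cast q.pos
      have hqnn : (0:ℝ) ≤ (q : ℝ) := by exact_mod_cast hq
      have hnum : ((q.num.toNat : ℕ) : ℝ) = (q : ℝ) * (q.den : ℝ) := by
        have h1 : ((q.num.toNat : ℕ) : ℝ) = ((q.num : ℤ) : ℝ) := by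
          exact_mod_cast Int.toNat_of_nonneg (Rat.num_nonneg.mpr hq)
        rw [h1]
        exact_mod_cast (Rat.mul_den_eq_num q).symm
      have h1 : f ((q.den : ℝ) * (q : ℝ)) = (q.den : ℝ) * f (q:ℝ) := fnat q.den q hqnn
      have h3 : f ((q.num.toNat : ℝ) * 1) = (q.num.toNat : ℝ) * f 1 :=
        fnat q.num.toNat 1 zero_le_one
      have h2 : (q.den : ℝ) * (q : ℝ) = (q.num.toNat : ℝ) * 1 := by rw [hnum]; ring
      have h5 : (q.den : ℝ) * f (q:ℝ) = (q.den:ℝ) * ((q:ℝ) * f 1) := by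
        rw [← h1, h2, h3, hnum]; ring
      exact mul_left_cancel₀ (ne_of_gt hden) h5
    have flin : ∀ t : ℝ, 0 ≤ t → f t = t * f 1 := by
      intro t ht
      have hub : f t ≤ t * f 1 := by
        by_contra h
        push_neg at h
        have htlt : t < f t / f 1 := (lt_div_iff₀ fpos).mpr (by linarith)
        obtain ⟨q, hq1, hq2⟩ := exists_rat_btwn htlt
        have hqnn : (0:ℚ) ≤ q := by
          have : (0:ℝ) < q := lt_of_le_of_lt ht hq1
          exact_mod_cast this.le
        have h1 : f t ≤ f q := fmono t q ht hq1.le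
        have h2 : f q = q * f 1 := frat q hqnn
        have h3 : (q:ℝ) * f 1 < f t := (lt_div_iff₀ fpos).mp hq2
        linarith
      have hlb : t * f 1 ≤ f t := by
        by_contra h
        push_neg at h
        have hftnn : 0 ≤ f t := f0 ▸ fmono 0 t le_rfl ht
        have htgt : f t / f 1 < t := (div_lt_iff₀ fpos).mpr (by linarith)
        obtain ⟨q, hq1, hq2⟩ := exists_rat_btwn htgt
        have hqnn : (0:ℚ) ≤ q := by
          have h0 : (0:ℝ) ≤ f t / f 1 := div_nonneg hftnn fpos.le
          have : (0:ℝ) ≤ q := le_of_lt (lt_of_le_of_lt h0 hq1)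
          exact_mod_cast this
        have h1 : f q ≤ f t := fmono q t (by exact_mod_cast hqnn) hq2.le
        have h2 : f q = q * f 1 := frat q hqnn
        have h3 : f t < (q:ℝ) * f 1 := (div_lt_iff₀ fpos).mp hq1
        linarith
      linarith
    exact flin
  -- the linear functional
  refine ⟨fun i => c (Pi.single i 1), ?_, ?_⟩
  · intro i
    have h1 : c (Pi.single i 1) = 1 * c (Pi.single i 1) := key i 1 zero_le_one
    -- positivity: reuse that 0 ≺ single i 1
    have hne : (0 : Fin n → ℝ) ≠ Pi.single i 1 := by
      intro h
      have := congrFun h i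
      simp at this
    have hstrict := (hmono 0 (Pi.single i 1) 0 nn0 (nnsingle i 1 zero_le_one) nn0
      (nnsingle i 1 zero_le_one) hne).2
    by_contra hle
    push_neg at hle
    have : R 0 (0 : Fin n → ℝ) (Pi.single i 1) := by
      refine (hrep 0 (Pi.single i 1) nn0 (nnsingle i 1 zero_le_one)).mpr ?_
      rw [hc0]
      exact hle
    exact absurd this hstrict
  · -- c is the claimed sum
    have csum : ∀ x : Fin n → ℝ, (∀ i, 0 ≤ x i) →
        c x = ∑ i, c (Pi.single i 1) * x i := by
      intro x hx
      have hdecomp : x = ∑ i, Pi.single i (x i) := (Finset.univ_sum_single x).symm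
      have hsum : ∀ s : Finset (Fin n),
          c (∑ i ∈ s, Pi.single i (x i)) = ∑ i ∈ s, c (Pi.single i (x i)) := by
        intro s
        induction s using Finset.induction_on with
        | empty => simpa using hc0
        | insert a s' hnotmem ih =>
          rw [Finset.sum_insert hnotmem, Finset.sum_insert hnotmem, ← ih]
          refine hadd _ _ (nnsingle a (x a) (hx a)) ?_
          intro j
          rw [Finset.sum_apply]
          exact Finset.sum_nonneg fun i _ => nnsingle i (x i) (hx i) j
      calc c x = ∑ i, c (Pi.single i (x i)) := by
            conv_lhs => rw [hdecomp]
            exact hsum Finset.univ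
        _ = ∑ i, c (Pi.single i 1) * x i := by
            refine Finset.sum_congr rfl fun i _ => ?_
            rw [key i (x i) (hx i)]; ring
    intro z x y hz hx hy
    rw [hnarrow z 0 x y hz nn0 hx hy, hrep x y hx hy, csum x hx, csum y hy]
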